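/- Let N ≥ 3 and let σ_N denote the (N−1)-dimensional surface measure of the unit sphere of ℝ^N. Let V : (0,∞) → [0,+∞] be measurable, let R₂ > 0 and γ∞ ≤ 2 be such that V(r) < +∞ for almost every r > R₂ and λ∞ := essinf_{r>R₂} r^{γ∞} V(r) > 0. Then every radially symmetric function u ∈ C¹(ℝ^N) with ∫_{ℝ^N} |∇u|² dx < ∞ and ∫_{ℝ^N} V(|x|) u(x)² dx < ∞ satisfies |u(x)| ≤ √(2/σ_N) · λ∞^{−1/4} · ‖u‖_V · |x|^{−(2(N−1)−γ∞)/4} for every x with |x| > R₂. -/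

import Mathlib

open MeasureTheory Filter Set
open scoped ENNReal
open Metric

section aux
variable {E : Type*} [NormedAddCommGroup E] [NormedSpace ℝ E] [MeasurableSpace E]
  [Nontrivial E] (μ : Measure E) [FiniteDimensional ℝ E] [BorelSpace E] [μ.IsAddHaarMeasure]

lemma lintegral_fun_norm_addHaar' (f : ℝ → ℝ≥0∞) (hf : Measurable f) :
    ∫⁻ x, f ‖x‖ ∂μ = μ.toSphere Set.univ *
      ∫⁻ y in Ioi (0 : ℝ), ENNReal.ofReal (y ^ (Module.finrank ℝ E - 1)) * f y := by
  calc
    ∫⁻ x, f ‖x‖ ∂μ = ∫⁻ x : ({(0)}ᶜ : Set E), f (‖x.1‖) ∂(μ.comap (↑)) := by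
      rw [lintegral_subtype_comap (measurableSet_singleton _).compl fun x ↦ f (‖x‖),
        restrict_compl_singleton]
    _ = ∫⁻ x : sphere (0 : E) 1 × Ioi (0 : ℝ), f x.2
        ∂μ.toSphere.prod (.volumeIoiPow (Module.finrank ℝ E - 1)) := by
      rw [← μ.measurePreserving_homeomorphUnitSphereProd.lintegral_comp_emb
        (Homeomorph.measurableEmbedding _)
        (fun p : sphere (0:E) 1 × Ioi (0:ℝ) => f p.2)]
      simp
    _ = μ.toSphere Set.univ *
        ∫⁻ x : Ioi (0 : ℝ), f x ∂(Measure.volumeIoiPow (Module.finrank ℝ E - 1)) := by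
      rw [MeasureTheory.lintegral_prod (fun p : sphere (0:E) 1 × Ioi (0:ℝ) => f p.2)
        ((hf.comp (measurable_subtype_coe.comp measurable_snd)).aemeasurable)]
      simp [lintegral_const, mul_comm]
    _ = _ := by
      rw [Measure.volumeIoiPow, lintegral_withDensity_eq_lintegral_mul _
        (by fun_prop) (g := fun x : Ioi (0:ℝ) => f x) (by fun_prop)]
      congr 1
      rw [← lintegral_subtype_comap measurableSet_Ioi
        (fun y : ℝ => ENNReal.ofReal (y ^ (Module.finrank ℝ E - 1)) * f y)]
      rfl

end aux

/-- `σ_N`, the (N−1)-dimensional surface measure of the unit sphere of `ℝ^N`,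
equals `N` times the Lebesgue volume of the unit ball. -/
noncomputable def sphereSurfaceMeasure (N : ℕ) : ℝ :=
  (N : ℝ) * (volume (Metric.ball (0 : EuclideanSpace ℝ (Fin N)) 1)).toReal

theorem radial_estimate_at_infinity
    (N : ℕ) (hN : 3 ≤ N)
    (V : ℝ → ℝ≥0∞) (hVmeas : Measurable V)
    (R₂ γ : ℝ) (hR₂ : 0 < R₂) (hγ : γ ≤ 2)
    (hVfin : ∀ᵐ r ∂(volume.restrict (Set.Ioi R₂)), V r < ⊤)
    (lam : ℝ≥0∞)
    (hlam : lam = essInf (fun r : ℝ => ENNReal.ofReal (r ^ γ) * V r)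
      (volume.restrict (Set.Ioi R₂)))
    (hlampos : 0 < lam)
    (u : EuclideanSpace ℝ (Fin N) → ℝ) (hu : ContDiff ℝ 1 u)
    (hrad : ∃ w : ℝ → ℝ, ∀ x, u x = w ‖x‖)
    (hgrad : Integrable (fun x : EuclideanSpace ℝ (Fin N) => ‖fderiv ℝ u x‖ ^ 2))
    (hVu : (∫⁻ x : EuclideanSpace ℝ (Fin N), V ‖x‖ * ENNReal.ofReal ((u x) ^ 2)) < ⊤) :
    ∀ x : EuclideanSpace ℝ (Fin N), R₂ < ‖x‖ →
      |u x| ≤ Real.sqrt (2 / sphereSurfaceMeasure N) * lam.toReal ^ (-(1 / 4 : ℝ)) *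
        Real.sqrt ((∫ x : EuclideanSpace ℝ (Fin N), ‖fderiv ℝ u x‖ ^ 2) +
          (∫⁻ x : EuclideanSpace ℝ (Fin N), V ‖x‖ * ENNReal.ofReal ((u x) ^ 2)).toReal) *
        ‖x‖ ^ (-(2 * ((N : ℝ) - 1) - γ) / 4) := by
  haveI : Nontrivial (EuclideanSpace ℝ (Fin N)) := by
    refine Module.nontrivial_of_finrank_pos (R := ℝ) (M := EuclideanSpace ℝ (Fin N)) ?_
    rw [finrank_euclideanSpace_fin]; omega
  have hdim : Module.finrank ℝ (EuclideanSpace ℝ (Fin N)) = N := finrank_euclideanSpace_fin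
  obtain ⟨w₀, hw₀⟩ := hrad
  -- the unit vector and the radial profile
  set e : EuclideanSpace ℝ (Fin N) := EuclideanSpace.single (⟨0, by omega⟩ : Fin N) (1:ℝ) with he'
  have he : ‖e‖ = 1 := by rw [he', EuclideanSpace.norm_single]; norm_num
  set w : ℝ → ℝ := fun t => u (t • e) with hwdef
  have hwc : ContDiff ℝ 1 w := hu.comp ((contDiff_id (E := ℝ)).smul (contDiff_const (c := e)))
  have hwpos : ∀ t : ℝ, 0 ≤ t → w t = w₀ t := by
    intro t ht
    rw [hwdef]
    simp only
    rw [hw₀, norm_smul, he, mul_one, Real.norm_eq_abs, abs_of_nonneg ht]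
  have hw : ∀ x : EuclideanSpace ℝ (Fin N), u x = w ‖x‖ := by
    intro x
    rw [hw₀ x, hwpos _ (norm_nonneg x)]
  -- derivative facts
  have hwd : ∀ t : ℝ, HasDerivAt w (deriv w t) t := fun t =>
    ((hwc.differentiable one_ne_zero) t).hasDerivAt
  have hw'cont : Continuous (deriv w) := hwc.continuous_deriv le_rfl
  have hwderiv : ∀ x : EuclideanSpace ℝ (Fin N), x ≠ 0 → |deriv w ‖x‖| ≤ ‖fderiv ℝ u x‖ := by
    intro x hx
    have hs : 0 < ‖x‖ := norm_pos_iff.2 hx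
    set v : EuclideanSpace ℝ (Fin N) := ‖x‖⁻¹ • x with hv
    have hv1 : ‖v‖ = 1 := norm_smul_inv_norm hx
    have hφ : HasDerivAt (fun t : ℝ => u (t • v)) ((fderiv ℝ u x) v) ‖x‖ := by
      have h1 : HasFDerivAt u (fderiv ℝ u x) (‖x‖ • v) := by
        rw [show ‖x‖ • v = x by rw [hv, smul_smul, mul_inv_cancel₀ hs.ne', one_smul]]
        exact ((hu.differentiable one_ne_zero) x).hasFDerivAt
      have h2 : HasDerivAt (fun t : ℝ => t • v) v ‖x‖ := by
        simpa using (hasDerivAt_id ‖x‖).smul_const v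
      exact h1.comp_hasDerivAt ‖x‖ h2
    have heq : (fun t : ℝ => u (t • v)) =ᶠ[nhds ‖x‖] w := by
      filter_upwards [eventually_gt_nhds hs] with t ht
      rw [hw₀ (t • v), norm_smul, hv1, mul_one, Real.norm_eq_abs, abs_of_pos ht,
        ← hwpos t ht.le]
    have hD : HasDerivAt w ((fderiv ℝ u x) v) ‖x‖ := hφ.congr_of_eventuallyEq heq.symm
    rw [hD.deriv]
    calc |(fderiv ℝ u x) v| ≤ ‖fderiv ℝ u x‖ * ‖v‖ := (fderiv ℝ u x).le_opNorm v
      _ = ‖fderiv ℝ u x‖ := by rw [hv1, mul_one]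
  -- spherical constants
  set S : ℝ≥0∞ := (volume : Measure (EuclideanSpace ℝ (Fin N))).toSphere Set.univ with hSdef
  have hS : S = N * volume (Metric.ball (0 : EuclideanSpace ℝ (Fin N)) 1) := by
    rw [hSdef, Measure.toSphere_apply_univ, hdim]
  have hball0 : volume (Metric.ball (0 : EuclideanSpace ℝ (Fin N)) 1) ≠ 0 :=
    (measure_ball_pos _ _ one_pos).ne'
  have hballtop : volume (Metric.ball (0 : EuclideanSpace ℝ (Fin N)) 1) ≠ ⊤ :=
    measure_ball_lt_top.ne
  have hS0 : S ≠ 0 := by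
    rw [hS]; exact mul_ne_zero (Nat.cast_ne_zero.2 (by omega)) hball0
  have hStop : S ≠ ⊤ := by
    rw [hS]; exact ENNReal.mul_ne_top (ENNReal.natCast_ne_top _) hballtop
  have hσ : sphereSurfaceMeasure N = S.toReal := by
    rw [sphereSurfaceMeasure, hS, ENNReal.toReal_mul, ENNReal.toReal_natCast]
  have hσpos : 0 < sphereSurfaceMeasure N := by
    rw [hσ]; exact ENNReal.toReal_pos hS0 hStop
  -- nat pow vs rpow
  have hNpow : ∀ y : ℝ, y ∈ Ioi (0:ℝ) →
      (y ^ (Module.finrank ℝ (EuclideanSpace ℝ (Fin N)) - 1 : ℕ) : ℝ) = y ^ ((N:ℝ) - 1) := by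
    intro y hy
    rw [hdim, ← Real.rpow_natCast y (N-1), Nat.cast_sub (by omega), Nat.cast_one]
  -- gradient side
  set Dg := ∫ x : EuclideanSpace ℝ (Fin N), ‖fderiv ℝ u x‖ ^ 2 with hDgdef
  have hDg0 : 0 ≤ Dg := integral_nonneg (fun x => sq_nonneg _)
  have key1 : (∫⁻ x : EuclideanSpace ℝ (Fin N), ENNReal.ofReal ((deriv w ‖x‖)^2))
      = S * ∫⁻ y in Ioi (0:ℝ), ENNReal.ofReal ((deriv w y)^2 * y ^ ((N:ℝ)-1)) := by
    rw [lintegral_fun_norm_addHaar' volume (fun y => ENNReal.ofReal ((deriv w y)^2))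
      (ENNReal.measurable_ofReal.comp ((hw'cont.pow 2).measurable))]
    congr 1
    refine setLIntegral_congr_fun measurableSet_Ioi (fun y hy => ?_)
    rw [← ENNReal.ofReal_mul (pow_nonneg (le_of_lt (mem_Ioi.1 hy)) _)]
    exact congrArg ENNReal.ofReal (by rw [hNpow y hy]; ring)
  have key1b : (∫⁻ x : EuclideanSpace ℝ (Fin N), ENNReal.ofReal ((deriv w ‖x‖)^2))
      ≤ ENNReal.ofReal Dg := by
    rw [hDgdef, MeasureTheory.ofReal_integral_eq_lintegral_ofReal hgrad
      (ae_of_all _ fun x => sq_nonneg _)]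
    refine lintegral_mono_ae ?_
    filter_upwards [(Set.countable_singleton (0:EuclideanSpace ℝ (Fin N))).ae_notMem volume]
      with x hx
    refine ENNReal.ofReal_le_ofReal ?_
    have h1 := hwderiv x (by simpa using hx)
    calc (deriv w ‖x‖)^2 = |deriv w ‖x‖|^2 := (sq_abs _).symm
      _ ≤ ‖fderiv ℝ u x‖^2 := by
          exact pow_le_pow_left₀ (abs_nonneg _) h1 2
  -- potential side
  set TV := ∫⁻ x : EuclideanSpace ℝ (Fin N), V ‖x‖ * ENNReal.ofReal ((u x) ^ 2) with hTVdef
  have hTVtop : TV ≠ ⊤ := hVu.ne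
  have key2 : TV = S * ∫⁻ y in Ioi (0:ℝ),
      ENNReal.ofReal (y ^ ((N:ℝ)-1)) * (V y * ENNReal.ofReal ((w y)^2)) := by
    rw [hTVdef]
    calc (∫⁻ x : EuclideanSpace ℝ (Fin N), V ‖x‖ * ENNReal.ofReal ((u x)^2))
        = ∫⁻ x : EuclideanSpace ℝ (Fin N), V ‖x‖ * ENNReal.ofReal ((w ‖x‖)^2) :=
          lintegral_congr fun x => by rw [hw x]
      _ = S * ∫⁻ y in Ioi (0:ℝ), ENNReal.ofReal
            (y ^ (Module.finrank ℝ (EuclideanSpace ℝ (Fin N)) - 1 : ℕ))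
            * (V y * ENNReal.ofReal ((w y)^2)) :=
          lintegral_fun_norm_addHaar' volume (fun y => V y * ENNReal.ofReal ((w y)^2))
            (hVmeas.mul (ENNReal.measurable_ofReal.comp ((hwc.continuous.pow 2).measurable)))
      _ = _ := by
          congr 1
          refine setLIntegral_congr_fun measurableSet_Ioi (fun y hy => ?_)
          rw [hNpow y hy]
  -- essInf consequences
  have hae : ∀ᵐ y ∂(volume.restrict (Ioi R₂)), lam ≤ ENNReal.ofReal (y ^ γ) * V y := by
    rw [hlam]; refine ae_essInf_le ?_
    exact ⟨0, Eventually.of_forall fun x => zero_le⟩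
  have hlamtop : lam ≠ ⊤ := by
    intro htop
    have h1 : ∀ᵐ y ∂(volume.restrict (Ioi R₂)), False := by
      filter_upwards [hae, hVfin] with y h1 h2
      rw [htop, top_le_iff] at h1
      exact (ENNReal.mul_ne_top ENNReal.ofReal_ne_top h2.ne) h1
    rw [eventually_false_iff_eq_bot, ae_eq_bot, Measure.restrict_eq_zero] at h1
    simp [Real.volume_Ioi] at h1
  set lr := lam.toReal with hlrdef
  have hlrpos : 0 < lr := ENNReal.toReal_pos hlampos.ne' hlamtop
  -- weighted lower bound via essInf
  set L₁ := ∫⁻ y in Ioi R₂, ENNReal.ofReal ((deriv w y)^2 * y ^ ((N:ℝ)-1)) with hL₁def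
  set L₂ := ∫⁻ y in Ioi R₂, ENNReal.ofReal ((w y)^2 * y ^ ((N:ℝ)-1-γ)) with hL₂def
  have key3 : lam * L₂ ≤
      ∫⁻ y in Ioi R₂, ENNReal.ofReal (y ^ ((N:ℝ)-1)) * (V y * ENNReal.ofReal ((w y)^2)) := by
    rw [hL₂def, ← lintegral_const_mul' _ _ hlamtop]
    refine lintegral_mono_ae ?_
    filter_upwards [hae, ae_restrict_mem measurableSet_Ioi] with y h1 h2
    have hy : (0:ℝ) < y := hR₂.trans h2
    calc lam * ENNReal.ofReal ((w y)^2 * y ^ ((N:ℝ)-1-γ))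
        ≤ (ENNReal.ofReal (y^γ) * V y) * ENNReal.ofReal ((w y)^2 * y ^ ((N:ℝ)-1-γ)) :=
          mul_le_mul_left h1 _
      _ = ENNReal.ofReal (y ^ ((N:ℝ)-1)) * (V y * ENNReal.ofReal ((w y)^2)) := by
          rw [mul_comm (ENNReal.ofReal (y^γ)) (V y), mul_assoc,
            ← ENNReal.ofReal_mul (Real.rpow_nonneg hy.le γ)]
          have hyp : y^γ * ((w y)^2 * y^((N:ℝ)-1-γ)) = y^((N:ℝ)-1) * (w y)^2 := by
            rw [show y^((N:ℝ)-1) = y^γ * y^((N:ℝ)-1-γ) by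
              rw [← Real.rpow_add hy]; ring_nf]
            ring
          rw [hyp, ENNReal.ofReal_mul (Real.rpow_nonneg hy.le _)]
          ring
  have hL₁bound : S * L₁ ≤ ENNReal.ofReal Dg := by
    refine le_trans (mul_le_mul_right (lintegral_mono_set (Ioi_subset_Ioi hR₂.le)) S) ?_
    rw [← key1]; exact key1b
  have hL₂bound : S * (lam * L₂) ≤ TV := by
    calc S * (lam * L₂)
        ≤ S * ∫⁻ y in Ioi R₂, ENNReal.ofReal (y ^ ((N:ℝ)-1)) * (V y * ENNReal.ofReal ((w y)^2)) :=
          mul_le_mul_right key3 S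
      _ ≤ S * ∫⁻ y in Ioi (0:ℝ),
            ENNReal.ofReal (y ^ ((N:ℝ)-1)) * (V y * ENNReal.ofReal ((w y)^2)) :=
          mul_le_mul_right (lintegral_mono_set (Ioi_subset_Ioi hR₂.le)) S
      _ = TV := key2.symm
  have hL₁top : L₁ ≠ ⊤ := by
    intro h
    rw [h, ENNReal.mul_top hS0] at hL₁bound
    exact (hL₁bound.trans_lt ENNReal.ofReal_lt_top).ne rfl
  have hL₂top : L₂ ≠ ⊤ := by
    intro h
    rw [h, ENNReal.mul_top hlampos.ne', ENNReal.mul_top hS0] at hL₂bound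
    exact (hL₂bound.trans_lt hVu).ne rfl
  -- real-valued integrands
  set G₁ : ℝ → ℝ := fun y => (deriv w y)^2 * y ^ ((N:ℝ)-1) with hG₁def
  set G₂ : ℝ → ℝ := fun y => (w y)^2 * y ^ ((N:ℝ)-1-γ) with hG₂def
  have hrpowcont : ∀ c : ℝ, ContinuousOn (fun y : ℝ => y ^ c) (Ioi (0:ℝ)) := fun c y hy =>
    (Real.continuousAt_rpow_const y c (Or.inl (mem_Ioi.1 hy).ne')).continuousWithinAt
  have hG₁cont : ContinuousOn G₁ (Ioi (0:ℝ)) :=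
    ((hw'cont.pow 2).continuousOn).mul (hrpowcont _)
  have hG₂cont : ContinuousOn G₂ (Ioi (0:ℝ)) :=
    ((hwc.continuous.pow 2).continuousOn).mul (hrpowcont _)
  have hG₁nn : ∀ y : ℝ, 0 < y → 0 ≤ G₁ y := fun y hy =>
    mul_nonneg (sq_nonneg _) (Real.rpow_nonneg hy.le _)
  have hG₂nn : ∀ y : ℝ, 0 < y → 0 ≤ G₂ y := fun y hy =>
    mul_nonneg (sq_nonneg _) (Real.rpow_nonneg hy.le _)
  have hsub : Ioi R₂ ⊆ Ioi (0:ℝ) := Ioi_subset_Ioi hR₂.le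
  have hnnae₁ : 0 ≤ᵐ[volume.restrict (Ioi R₂)] G₁ := by
    filter_upwards [ae_restrict_mem measurableSet_Ioi] with y hy
    exact hG₁nn y (hR₂.trans hy)
  have hnnae₂ : 0 ≤ᵐ[volume.restrict (Ioi R₂)] G₂ := by
    filter_upwards [ae_restrict_mem measurableSet_Ioi] with y hy
    exact hG₂nn y (hR₂.trans hy)
  have hG₁int : IntegrableOn G₁ (Ioi R₂) := by
    refine ⟨(hG₁cont.mono hsub).aestronglyMeasurable measurableSet_Ioi, ?_⟩
    rw [hasFiniteIntegral_iff_ofReal hnnae₁]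
    exact hL₁top.lt_top
  have hG₂int : IntegrableOn G₂ (Ioi R₂) := by
    refine ⟨(hG₂cont.mono hsub).aestronglyMeasurable measurableSet_Ioi, ?_⟩
    rw [hasFiniteIntegral_iff_ofReal hnnae₂]
    exact hL₂top.lt_top
  set A₁ := ∫ y in Ioi R₂, G₁ y with hA₁def
  set A₂ := ∫ y in Ioi R₂, G₂ y with hA₂def
  have hA₁nn : 0 ≤ A₁ :=
    setIntegral_nonneg measurableSet_Ioi fun y hy => hG₁nn y (hR₂.trans hy)
  have hA₂nn : 0 ≤ A₂ :=
    setIntegral_nonneg measurableSet_Ioi fun y hy => hG₂nn y (hR₂.trans hy)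
  have hA₁L : ENNReal.ofReal A₁ = L₁ :=
    ofReal_integral_eq_lintegral_ofReal hG₁int hnnae₁
  have hA₂L : ENNReal.ofReal A₂ = L₂ :=
    ofReal_integral_eq_lintegral_ofReal hG₂int hnnae₂
  have hreal₁ : sphereSurfaceMeasure N * A₁ ≤ Dg := by
    have h := ENNReal.toReal_mono ENNReal.ofReal_ne_top hL₁bound
    rw [ENNReal.toReal_mul, ← hA₁L, ENNReal.toReal_ofReal hA₁nn,
      ENNReal.toReal_ofReal hDg0] at h
    rw [hσ]; exact h
  have hreal₂ : sphereSurfaceMeasure N * (lr * A₂) ≤ TV.toReal := by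
    have h := ENNReal.toReal_mono hTVtop hL₂bound
    rw [ENNReal.toReal_mul, ENNReal.toReal_mul, ← hA₂L, ENNReal.toReal_ofReal hA₂nn] at h
    rw [hσ, hlrdef]; exact h
  -- the FTC estimate
  set β := (N:ℝ) - 1 - γ/2 with hβdef
  have hN3 : (3:ℝ) ≤ (N:ℝ) := by exact_mod_cast hN
  have hβ1 : 1 ≤ β := by rw [hβdef]; linarith
  set c := lr ^ ((1:ℝ)/2) with hcdef
  have hcpos : 0 < c := Real.rpow_pos_of_pos hlrpos _
  have hc2 : c^2 = lr := by
    rw [hcdef, ← Real.rpow_natCast (lr ^ ((1:ℝ)/2)) 2, ← Real.rpow_mul hlrpos.le]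
    norm_num
  set Gl : ℝ → ℝ := fun t => c⁻¹ * G₁ t + c * G₂ t with hGldef
  set F : ℝ → ℝ := fun t => (w t)^2 * t ^ β with hFdef
  have hFderiv : ∀ t : ℝ, 0 < t → HasDerivAt F
      (2 * w t * deriv w t * t ^ β + (w t)^2 * (β * t ^ (β - 1))) t := by
    intro t ht
    have h1 : HasDerivAt (fun s : ℝ => (w s)^2) (2 * w t * deriv w t) t := by
      have h : HasDerivAt (fun s : ℝ => (w s)^2) (((2:ℕ):ℝ) * w t ^ (2 - 1) * deriv w t) t :=
        (hwd t).pow 2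
      convert h using 1
      norm_num
    have h2 : HasDerivAt (fun s : ℝ => s ^ β) (β * t ^ (β-1)) t :=
      Real.hasDerivAt_rpow_const (Or.inl ht.ne')
    exact h1.mul h2
  have hFnn : ∀ t : ℝ, 0 < t → 0 ≤ F t := fun t ht =>
    mul_nonneg (sq_nonneg _) (Real.rpow_nonneg ht.le _)
  have hGkey : ∀ t : ℝ, R₂ < t →
      -(Gl t) ≤ 2 * w t * deriv w t * t ^ β + (w t)^2 * (β * t ^ (β-1)) := by
    intro t ht
    have ht0 : 0 < t := hR₂.trans ht
    set a := |deriv w t| * t ^ (((N:ℝ)-1)/2) with hadef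
    set b := |w t| * t ^ (((N:ℝ)-1-γ)/2) with hbdef
    have hrpow2 : ∀ q : ℝ, (t ^ q)^2 = t ^ (2*q) := by
      intro q
      rw [← Real.rpow_natCast (t ^ q) 2, ← Real.rpow_mul ht0.le]
      ring_nf
    have ha2 : a^2 = G₁ t := by
      rw [hadef, mul_pow, sq_abs, hrpow2,
        show (2:ℝ) * (((N:ℝ)-1)/2) = (N:ℝ)-1 from by ring]
    have hb2 : b^2 = G₂ t := by
      rw [hbdef, mul_pow, sq_abs, hrpow2,
        show (2:ℝ) * (((N:ℝ)-1-γ)/2) = (N:ℝ)-1-γ from by ring]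
    have htβ : t ^ (((N:ℝ)-1)/2) * t ^ (((N:ℝ)-1-γ)/2) = t ^ β := by
      rw [← Real.rpow_add ht0,
        show ((N:ℝ)-1)/2 + ((N:ℝ)-1-γ)/2 = β from by rw [hβdef]; ring]
    have hab : a * b = |w t| * |deriv w t| * t ^ β := by
      rw [hadef, hbdef, ← htβ]; ring
    have hamg : 2 * (a * b) ≤ c⁻¹ * a^2 + c * b^2 := by
      have hkey : c⁻¹ * a^2 + c * b^2 - 2*(a*b) = c⁻¹ * (a - c*b)^2 := by
        field_simp; ring
      have hpos := mul_nonneg (inv_nonneg.2 hcpos.le) (sq_nonneg (a - c*b))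
      linarith [hkey, hpos]
    have h3 : 0 ≤ (w t)^2 * (β * t ^ (β-1)) :=
      mul_nonneg (sq_nonneg _) (mul_nonneg (by linarith) (Real.rpow_nonneg ht0.le _))
    have hGlval : Gl t = c⁻¹ * a^2 + c * b^2 := by rw [hGldef, ha2, hb2]
    have habs2 : |2 * w t * deriv w t * t ^ β| ≤ Gl t := by
      calc |2 * w t * deriv w t * t ^ β| = 2 * (a * b) := by
            rw [hab, abs_mul, abs_mul, abs_mul, abs_two,
              abs_of_nonneg (Real.rpow_nonneg ht0.le β)]
            ring
        _ ≤ c⁻¹ * a^2 + c * b^2 := hamg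
        _ = Gl t := hGlval.symm
    have h5 : -(Gl t) ≤ 2 * w t * deriv w t * t ^ β :=
      le_trans (neg_le_neg habs2) (neg_abs_le _)
    exact h5.trans (le_add_of_nonneg_right h3)
  have hGlint : IntegrableOn Gl (Ioi R₂) :=
    (hG₁int.const_mul _).add (hG₂int.const_mul _)
  have hGlnn : ∀ t : ℝ, R₂ < t → 0 ≤ Gl t := fun t ht =>
    add_nonneg (mul_nonneg (inv_nonneg.2 hcpos.le) (hG₁nn _ (hR₂.trans ht)))
      (mul_nonneg hcpos.le (hG₂nn _ (hR₂.trans ht)))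
  set C := ∫ t in Ioi R₂, Gl t with hCdef
  have hCval : C = c⁻¹ * A₁ + c * A₂ := by
    rw [hCdef, hGldef, hA₁def, hA₂def]
    rw [integral_add (hG₁int.const_mul _) (hG₂int.const_mul _),
      integral_const_mul, integral_const_mul]
  have hFTC : ∀ r s : ℝ, R₂ < r → r ≤ s → F r ≤ F s + C := by
    intro r s hr hrs
    have hIccsub : Icc r s ⊆ Ioi R₂ := fun t ht => lt_of_lt_of_le hr ht.1
    have hIoisub : Icc r s ⊆ Ioi (0:ℝ) := fun t ht => hR₂.trans (hIccsub ht)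
    have hDcont : ContinuousOn
        (fun t => 2 * w t * deriv w t * t ^ β + (w t)^2 * (β * t ^ (β-1)))
        (Ioi (0:ℝ)) := by
      refine ContinuousOn.add ?_ ?_
      · exact (((continuous_const.mul hwc.continuous).mul hw'cont).continuousOn).mul
          (hrpowcont β)
      · exact ((hwc.continuous.pow 2).continuousOn).mul
          (continuousOn_const.mul (hrpowcont (β-1)))
    have hDint : IntervalIntegrable
        (fun t => 2 * w t * deriv w t * t ^ β + (w t)^2 * (β * t ^ (β-1))) volume r s :=
      (hDcont.mono hIoisub).intervalIntegrable_of_Icc hrs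
    have heq : F s - F r =
        ∫ t in r..s, (2 * w t * deriv w t * t ^ β + (w t)^2 * (β * t ^ (β-1))) := by
      refine (intervalIntegral.integral_eq_sub_of_hasDerivAt ?_ hDint).symm
      intro t ht
      rw [uIcc_of_le hrs] at ht
      exact hFderiv t (hR₂.trans (hIccsub ht))
    have hGlIcc : IntervalIntegrable Gl volume r s := by
      refine IntegrableOn.intervalIntegrable ?_
      rw [uIcc_of_le hrs]
      exact hGlint.mono_set hIccsub
    have hmono : ∫ t in r..s, -(Gl t) ≤
        ∫ t in r..s, (2 * w t * deriv w t * t ^ β + (w t)^2 * (β * t ^ (β-1))) := by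
      refine intervalIntegral.integral_mono_on hrs hGlIcc.neg hDint fun t ht => ?_
      exact hGkey t (lt_of_lt_of_le hr ht.1)
    rw [intervalIntegral.integral_neg] at hmono
    have h3 : ∫ t in r..s, Gl t ≤ C := by
      rw [intervalIntegral.integral_of_le hrs, hCdef]
      refine setIntegral_mono_set hGlint ?_ ?_
      · filter_upwards [ae_restrict_mem measurableSet_Ioi] with t ht using hGlnn t ht
      · exact (Ioc_subset_Ioi_self.trans (Ioi_subset_Ioi hr.le)).eventuallyLE
    linarith
  have hsmall : ∀ r : ℝ, R₂ < r → ∀ ε : ℝ, 0 < ε → ∃ s : ℝ, r ≤ s ∧ F s < ε := by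
    intro r hr ε hε
    by_contra hcon
    push_neg at hcon
    set s₀ := max r 1 with hs₀def
    have hs₀pos : (0:ℝ) < s₀ := lt_of_lt_of_le one_pos (le_max_right _ _)
    have hs₀R : R₂ ≤ s₀ := hr.le.trans (le_max_left r 1)
    have hbound : ∀ t ∈ Ioi s₀, ε * t ^ (-(1:ℝ)) ≤ G₂ t := by
      intro t ht
      have ht1 : (1:ℝ) < t := lt_of_le_of_lt (le_max_right r 1) ht
      have ht0 : (0:ℝ) < t := one_pos.trans ht1
      have hFt : ε ≤ F t := hcon t ((le_max_left r 1).trans (le_of_lt ht))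
      have hG₂F : G₂ t = F t * t ^ (-(γ/2)) := by
        rw [hG₂def, hFdef]
        simp only
        rw [mul_assoc, ← Real.rpow_add ht0, hβdef]
        ring_nf
      have hexp : t ^ (-(1:ℝ)) ≤ t ^ (-(γ/2)) :=
        Real.rpow_le_rpow_of_exponent_le ht1.le (by linarith)
      calc ε * t^(-(1:ℝ)) ≤ F t * t^(-(γ/2)) :=
            mul_le_mul hFt hexp (Real.rpow_nonneg ht0.le _) (le_trans hε.le hFt)
        _ = G₂ t := hG₂F.symm
    have hint : IntegrableOn (fun t : ℝ => ε * t ^ (-(1:ℝ))) (Ioi s₀) := by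
      refine Integrable.mono' (hG₂int.mono_set (Ioi_subset_Ioi hs₀R)) ?_ ?_
      · exact ((continuousOn_const.mul (hrpowcont (-(1:ℝ)))).mono
          (Ioi_subset_Ioi hs₀pos.le)).aestronglyMeasurable measurableSet_Ioi
      · filter_upwards [ae_restrict_mem measurableSet_Ioi] with t ht
        rw [Real.norm_eq_abs, abs_of_nonneg
          (mul_nonneg hε.le (Real.rpow_nonneg (hs₀pos.trans ht).le _))]
        exact hbound t ht
    have hint2 : IntegrableOn (fun t : ℝ => t ^ (-(1:ℝ))) (Ioi s₀) := by
      have h := hint.const_mul ε⁻¹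
      have heq : (fun t : ℝ => ε⁻¹ * (ε * t ^ (-(1:ℝ)))) = fun t : ℝ => t ^ (-(1:ℝ)) := by
        funext t; rw [← mul_assoc, inv_mul_cancel₀ hε.ne', one_mul]
      rwa [heq] at h
    rw [integrableOn_Ioi_rpow_iff hs₀pos] at hint2
    linarith
  -- conclusion
  intro x hx
  have hr0 : (0:ℝ) < ‖x‖ := hR₂.trans hx
  have hFrC : F ‖x‖ ≤ C := by
    refine le_of_forall_pos_le_add fun ε hε => ?_
    obtain ⟨s, hs1, hs2⟩ := hsmall ‖x‖ hx ε hε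
    have := hFTC ‖x‖ s hx hs1
    linarith
  set TVr := TV.toReal with hTVrdef
  have hTVr0 : 0 ≤ TVr := ENNReal.toReal_nonneg
  have hcinv : c⁻¹ = lr ^ (-(1:ℝ)/2) := by
    rw [show (-(1:ℝ)/2) = -((1:ℝ)/2) from by ring, Real.rpow_neg hlrpos.le, hcdef]
  have hCbound : sphereSurfaceMeasure N * C ≤ c⁻¹ * (Dg + TVr) := by
    have h1 : sphereSurfaceMeasure N * (c⁻¹ * A₁) ≤ c⁻¹ * Dg := by
      have := mul_le_mul_of_nonneg_left hreal₁ (inv_nonneg.2 hcpos.le)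
      linarith [this]
    have h2 : sphereSurfaceMeasure N * (c * A₂) ≤ c⁻¹ * TVr := by
      have hca : c * A₂ = c⁻¹ * (lr * A₂) := by
        rw [← hc2]; field_simp
      rw [hca]
      have := mul_le_mul_of_nonneg_left hreal₂ (inv_nonneg.2 hcpos.le)
      rw [hTVrdef]
      linarith [this]
    rw [hCval]
    linarith [h1, h2]
  have hwr2 : (w ‖x‖)^2 ≤ C * ‖x‖ ^ (-β) := by
    have hFval : F ‖x‖ = (w ‖x‖)^2 * ‖x‖ ^ β := rfl
    have hstep : (w ‖x‖)^2 = F ‖x‖ * ‖x‖ ^ (-β) := by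
      rw [hFval, mul_assoc, ← Real.rpow_add hr0]
      simp
    rw [hstep]
    exact mul_le_mul_of_nonneg_right hFrC (Real.rpow_nonneg hr0.le _)
  have hCnn : 0 ≤ C := le_trans (hFnn ‖x‖ hr0) hFrC
  have hDtot : C ≤ 2 / sphereSurfaceMeasure N * (lr ^ (-(1:ℝ)/2)) * (Dg + TVr) := by
    rw [← hcinv]
    have hDg_TVr : 0 ≤ Dg + TVr := add_nonneg hDg0 hTVr0
    rw [div_mul_eq_mul_div, div_mul_eq_mul_div, le_div_iff₀ hσpos]
    calc C * sphereSurfaceMeasure N = sphereSurfaceMeasure N * C := by ring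
      _ ≤ c⁻¹ * (Dg + TVr) := hCbound
      _ ≤ 2 * c⁻¹ * (Dg + TVr) := by
          have h5 : 0 ≤ c⁻¹ * (Dg + TVr) := mul_nonneg (inv_nonneg.2 hcpos.le) hDg_TVr
          linarith
  have habs : |u x| = |w ‖x‖| := by rw [hw x]
  rw [habs, ← Real.sqrt_sq_eq_abs]
  have hstep2 : Real.sqrt ((w ‖x‖)^2) ≤
      Real.sqrt ((2 / sphereSurfaceMeasure N * (lr ^ (-(1:ℝ)/2)) * (Dg + TVr)) * ‖x‖ ^ (-β)) := by
    refine Real.sqrt_le_sqrt ?_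
    refine le_trans hwr2 (mul_le_mul_of_nonneg_right hDtot (Real.rpow_nonneg hr0.le _))
  refine hstep2.trans (le_of_eq ?_)
  have h2σ : (0:ℝ) ≤ 2 / sphereSurfaceMeasure N := by positivity
  have hlrh : (0:ℝ) ≤ lr ^ (-(1:ℝ)/2) := Real.rpow_nonneg hlrpos.le _
  have hDT : (0:ℝ) ≤ Dg + TVr := add_nonneg hDg0 hTVr0
  rw [Real.sqrt_mul (mul_nonneg (mul_nonneg h2σ hlrh) hDT) (‖x‖ ^ (-β)),
    Real.sqrt_mul (mul_nonneg h2σ hlrh) (Dg + TVr),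
    Real.sqrt_mul h2σ (lr ^ (-(1:ℝ)/2))]
  have hs1 : Real.sqrt (lr ^ (-(1:ℝ)/2)) = lr ^ (-(1/4:ℝ)) := by
    rw [Real.sqrt_eq_rpow, ← Real.rpow_mul hlrpos.le]
    norm_num
  have hs2 : Real.sqrt (‖x‖ ^ (-β)) = ‖x‖ ^ (-(2 * ((N : ℝ) - 1) - γ) / 4) := by
    rw [Real.sqrt_eq_rpow, ← Real.rpow_mul hr0.le]
    congr 1
    rw [hβdef]; ring
  rw [hs1, hs2]
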